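/- For any a > 0, ∫_0^∞ e^{-s²} I₁(a s)² s ds = (1/2) e^{a²/2} I₁(a²/2), where I₁ is the modified Bessel function of the first kind of order 1. -/

import Mathlib

open Real MeasureTheory

/-- The modified Bessel function of the first kind of order 1,
`I₁(x) = ∑_{m=0}^∞ (1/(m!(m+1)!)) (x/2)^{2m+1}`. -/
noncomputable def besselI1 (x : ℝ) : ℝ :=
  ∑' m : ℕ, (1 / (Nat.factorial m * Nat.factorial (m + 1)) : ℝ) * (x / 2) ^ (2 * m + 1)

open Polynomial Finset

namespace Stmt3Aux

lemma two_eq_C : (2 : ℕ[X]) = Polynomial.C 2 := by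
  norm_cast

lemma coeff_two_X_add_one (m i : ℕ) :
    (((2:ℕ[X]) * X + 1) ^ m).coeff i = m.choose i * 2 ^ i := by
  rw [add_pow, Polynomial.finset_sum_coeff]
  have h : ∀ t ∈ range (m+1), (((2:ℕ[X])*X)^t * 1^(m-t) * (m.choose t : ℕ[X])).coeff i
      = if i = t then m.choose t * 2^t else 0 := by
    intro t _
    have : ((2:ℕ[X])*X)^t * 1^(m-t) * (m.choose t : ℕ[X])
        = Polynomial.C (m.choose t * 2^t) * X^t := by
      rw [two_eq_C, one_pow, mul_one, mul_pow, ← Polynomial.C_pow,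
        ← Polynomial.C_eq_natCast, map_mul, Nat.cast_id]
      ring
    rw [this, Polynomial.coeff_C_mul, Polynomial.coeff_X_pow]
    split <;> simp_all
  rw [Finset.sum_congr rfl h, Finset.sum_ite_eq (range (m+1)) i]
  split
  · rfl
  · rename_i hi
    rw [Nat.choose_eq_zero_of_lt (by simpa using hi), zero_mul]

lemma N1 (k n : ℕ) : ((2*k).choose n : ℕ)
    = ∑ j ∈ range (k+1),
        if 2*j ≤ n then k.choose j * ((k-j).choose (n-2*j) * 2^(n-2*j)) else 0 := by
  have expand : ((X+1:ℕ[X]))^(2*k)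
      = ∑ j ∈ range (k+1),
          ((((2:ℕ[X])*X+1)^(k-j) * (k.choose j : ℕ[X])) * X^(2*j)) := by
    rw [pow_mul]
    have h2 : ((X+1:ℕ[X]))^2 = X^2 + ((2:ℕ[X])*X+1) := by ring
    rw [h2, add_pow]
    refine Finset.sum_congr rfl fun j hj => ?_
    rw [← pow_mul]
    ring
  have := congrArg (fun p => Polynomial.coeff p n) expand
  simp only [Polynomial.coeff_X_add_one_pow, Nat.cast_id, Polynomial.finset_sum_coeff] at this
  rw [this]
  refine Finset.sum_congr rfl fun j hj => ?_
  rw [Polynomial.coeff_mul_X_pow', ← Polynomial.C_eq_natCast, Polynomial.coeff_mul_C,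
    coeff_two_X_add_one]
  split
  · push_cast
    ring
  · rfl

end Stmt3Aux

namespace Stmt3Aux
open Nat

lemma idProd1 (k m : ℕ) (h : 2*m ≤ k) :
    (k.choose m : ℝ) * ((k-m).choose (k-2*m)) = (k.choose (2*m) : ℝ) * ((2*m).choose m) := by
  rw [Nat.cast_choose ℝ (by omega : m ≤ k), Nat.cast_choose ℝ (by omega : k-2*m ≤ k-m),
    Nat.cast_choose ℝ h, Nat.cast_choose ℝ (by omega : m ≤ 2*m)]
  have e1 : k - m - (k - 2*m) = m := by omega
  have e2 : 2*m - m = m := by omega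
  rw [e1, e2]
  have p1 := (Nat.factorial_pos m).ne'
  have p2 := (Nat.factorial_pos (k-m)).ne'
  have p3 := (Nat.factorial_pos (k-2*m)).ne'
  have p4 := (Nat.factorial_pos (2*m)).ne'
  field_simp

lemma idProd2 (k m : ℕ) (h : 2*m ≤ k) :
    (k.choose (m+1) : ℝ) * ((k-(m+1)).choose (k-2*m)) =
      (k.choose (2*m) : ℝ) * ((2*m).choose (m+1)) := by
  rcases Nat.eq_zero_or_pos m with rfl | hm
  · rcases Nat.eq_zero_or_pos k with rfl | hk
    · simp
    · have : (k - 1).choose k = 0 := Nat.choose_eq_zero_of_lt (by omega)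
      simp [this]
  · have h1 : m + 1 ≤ k := by omega
    rw [Nat.cast_choose ℝ h1, Nat.cast_choose ℝ (by omega : k-2*m ≤ k-(m+1)),
      Nat.cast_choose ℝ h, Nat.cast_choose ℝ (by omega : m+1 ≤ 2*m)]
    have e1 : k - (m+1) - (k - 2*m) = m - 1 := by omega
    have e2 : 2*m - (m+1) = m - 1 := by omega
    rw [e1, e2]
    have p1 := (Nat.factorial_pos (m+1)).ne'
    have p2 := (Nat.factorial_pos (k-(m+1))).ne'
    have p3 := (Nat.factorial_pos (k-2*m)).ne'
    have p4 := (Nat.factorial_pos (2*m)).ne'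
    have p5 := (Nat.factorial_pos (m-1)).ne'
    field_simp

lemma N1R (k n : ℕ) : ((2*k).choose n : ℝ)
    = ∑ j ∈ Finset.range (k+1),
        if 2*j ≤ n then (k.choose j : ℝ) * (((k-j).choose (n-2*j)) * 2^(n-2*j)) else 0 := by
  have h := congrArg (fun x : ℕ => (x : ℝ)) (N1 k n)
  push_cast [apply_ite (fun (x : ℕ) => (x : ℝ))] at h
  exact h

lemma N1aR (k : ℕ) : ((2*k).choose k : ℝ)
    = ∑ m ∈ Finset.range (k/2+1), (k.choose (2*m) : ℝ) * ((2*m).choose m) * 2^(k-2*m) := by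
  rw [N1R k k]
  rw [← Finset.sum_subset (Finset.range_subset_range.2 (by omega : k/2+1 ≤ k+1))
    (fun x _ hx => by
      rw [if_neg]
      simp only [Finset.mem_range] at hx
      omega)]
  refine Finset.sum_congr rfl fun m hm => ?_
  simp only [Finset.mem_range] at hm
  have h2m : 2*m ≤ k := by omega
  rw [if_pos h2m, ← mul_assoc, idProd1 k m h2m]

lemma N1bR (k : ℕ) : ((2*k).choose (k+2) : ℝ)
    = ∑ m ∈ Finset.range (k/2+1), (k.choose (2*m) : ℝ) * ((2*m).choose (m+1)) * 2^(k-2*m) := by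
  rw [N1R k (k+2), Finset.sum_range_succ']
  have h0 : (if 2*0 ≤ k+2 then (k.choose 0 : ℝ) * (((k-0).choose (k+2-2*0)) * 2^(k+2-2*0)) else 0)
      = 0 := by
    rw [if_pos (by omega)]
    have : k.choose (k+2) = 0 := Nat.choose_eq_zero_of_lt (by omega)
    simp [this]
  rw [h0, add_zero]
  have lhs_eq : (∑ m ∈ Finset.range k,
      if 2*(m+1) ≤ k+2 then (k.choose (m+1) : ℝ)
        * (((k-(m+1)).choose (k+2-2*(m+1))) * 2^(k+2-2*(m+1))) else 0)
      = ∑ m ∈ Finset.range (k+2),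
      if 2*m ≤ k then (k.choose (m+1) : ℝ)
        * (((k-(m+1)).choose (k-2*m)) * 2^(k-2*m)) else 0 := by
    rw [Finset.sum_subset (Finset.range_subset_range.2 (by omega : k ≤ k+2))
      (fun x hx hnx => by
        simp only [Finset.mem_range] at hx hnx
        by_cases hc : 2*(x+1) ≤ k+2
        · rw [if_pos hc]
          have hk : k = 0 := by omega
          have hx0 : x = 0 := by omega
          subst hk; subst hx0
          simp
        · rw [if_neg hc])]
    refine Finset.sum_congr rfl fun m hm => ?_
    have e : k+2-2*(m+1) = k - 2*m := by omega
    rw [e]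
    by_cases hc : 2*m ≤ k
    · rw [if_pos (by omega : 2*(m+1) ≤ k+2), if_pos hc]
    · rw [if_neg (by omega), if_neg hc]
  rw [lhs_eq]
  rw [← Finset.sum_subset (Finset.range_subset_range.2 (by omega : k/2+1 ≤ k+2))
    (fun x _ hx => by
      rw [if_neg]
      simp only [Finset.mem_range] at hx
      omega)]
  refine Finset.sum_congr rfl fun m hm => ?_
  simp only [Finset.mem_range] at hm
  have h2m : 2*m ≤ k := by omega
  rw [if_pos h2m, ← mul_assoc, idProd2 k m h2m]

end Stmt3Aux

namespace Stmt3Aux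
open Nat

lemma catdiff (m : ℕ) :
    ((2*m).choose m : ℝ) - ((2*m).choose (m+1)) = (2*m)! / (m ! * (m+1)!) := by
  cases m with
  | zero => simp
  | succ n =>
    rw [Nat.cast_choose ℝ (by omega : n+1 ≤ 2*(n+1)),
      Nat.cast_choose ℝ (by omega : n+1+1 ≤ 2*(n+1))]
    have e1 : 2*(n+1) - (n+1) = n+1 := by omega
    have e2 : 2*(n+1) - (n+1+1) = n := by omega
    rw [e1, e2]
    have hf1 : ((n+1)! : ℝ) = (n+1) * n ! := by push_cast [Nat.factorial_succ]; ring
    have hf2 : ((n+1+1)! : ℝ) = (n+2) * ((n+1) * n !) := by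
      push_cast [Nat.factorial_succ]; ring
    rw [hf1, hf2]
    have p1 := (Nat.factorial_pos n).ne'
    have pn : ((n:ℝ)+1) ≠ 0 := by positivity
    have pn2 : ((n:ℝ)+2) ≠ 0 := by positivity
    push_cast
    field_simp
    ring

lemma key2 (k : ℕ) :
    ((2*k+2).choose (k+1) : ℝ) * (k+1)! / (k+2)!
      = ((2*k).choose k : ℝ) - ((2*k).choose (k+2)) := by
  match k with
  | 0 => norm_num [Nat.factorial]
  | 1 => norm_num [Nat.factorial, Nat.choose]
  | (n+2) =>
    have c1 : ((2*(n+2)+2).choose (n+2+1) : ℝ) = (2*(n+2)+2)! / ((n+3)! * (n+3)!) := by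
      rw [Nat.cast_choose ℝ (by omega : n+2+1 ≤ 2*(n+2)+2),
        show 2*(n+2)+2 - (n+2+1) = n+3 from by omega]
    have c2 : ((2*(n+2)).choose (n+2) : ℝ) = (2*(n+2))! / ((n+2)! * (n+2)!) := by
      rw [Nat.cast_choose ℝ (by omega : n+2 ≤ 2*(n+2)),
        show 2*(n+2) - (n+2) = n+2 from by omega]
    have c3 : ((2*(n+2)).choose (n+2+2) : ℝ) = (2*(n+2))! / ((n+4)! * n !) := by
      rw [Nat.cast_choose ℝ (by omega : n+2+2 ≤ 2*(n+2)),
        show 2*(n+2) - (n+2+2) = n from by omega]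
    rw [c1, c2, c3]
    have hf1 : ((2*(n+2)+2)! : ℝ) = (2*(n:ℝ)+6) * ((2*n+5) * (2*(n+2))!) := by
      rw [show 2*(n+2)+2 = (2*(n+2)+1)+1 from by omega, Nat.factorial_succ,
        Nat.factorial_succ]
      push_cast
      ring
    have hf2 : ((n+2)! : ℝ) = ((n:ℝ)+2) * ((n+1) * n !) := by
      rw [Nat.factorial_succ, Nat.factorial_succ]
      push_cast
      ring
    have hf3 : ((n+3)! : ℝ) = ((n:ℝ)+3) * (((n:ℝ)+2) * ((n+1) * n !)) := by
      rw [show n+3 = (n+2)+1 from rfl, Nat.factorial_succ]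
      push_cast
      rw [hf2]
      ring
    have hf4 : ((n+4)! : ℝ) = ((n:ℝ)+4) * (((n:ℝ)+3) * (((n:ℝ)+2) * ((n+1) * n !))) := by
      rw [show n+4 = (n+3)+1 from rfl, Nat.factorial_succ]
      push_cast
      rw [hf3]
      ring
    have hf2' : ((n+2+1)! : ℝ) = ((n:ℝ)+3) * (((n:ℝ)+2) * ((n+1) * n !)) := hf3
    have hf2'' : ((n+2+2)! : ℝ) = ((n:ℝ)+4) * (((n:ℝ)+3) * (((n:ℝ)+2) * ((n+1) * n !))) := hf4
    rw [hf1, hf2', hf2'']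
    rw [hf2]
    have p0 := (Nat.factorial_pos (2*(n+2))).ne'
    have p2 := (Nat.factorial_pos n).ne'
    have q1 : ((n:ℝ)+1) ≠ 0 := by positivity
    have q2 : ((n:ℝ)+2) ≠ 0 := by positivity
    have q3 : ((n:ℝ)+3) ≠ 0 := by positivity
    have q4 : ((n:ℝ)+4) ≠ 0 := by positivity
    have p0' : ((2*(n+2))! : ℝ) ≠ 0 := by exact_mod_cast p0
    have p2' : ((n)! : ℝ) ≠ 0 := by exact_mod_cast p2
    field_simp
    ring

end Stmt3Aux

namespace Stmt3Aux
open Nat Finset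

noncomputable def Bk (k : ℕ) : ℝ :=
  ∑ m ∈ range (k/2+1), 2^(k-2*m) / (((k-2*m)! : ℝ) * (m ! * (m+1)!))

noncomputable def phik (k : ℕ) : ℝ := ((2*k+2).choose (k+1) : ℝ) * (k+1)! / (k ! * (k+2)!)

lemma Bk_eq (k : ℕ) : Bk k = phik k := by
  have hk : (k ! : ℝ) ≠ 0 := by exact_mod_cast (Nat.factorial_pos k).ne'
  have hk2 : ((k+2)! : ℝ) ≠ 0 := by exact_mod_cast (Nat.factorial_pos (k+2)).ne'
  have key : Bk k * k ! = ((2*k).choose k : ℝ) - ((2*k).choose (k+2)) := by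
    have step : ∀ m ∈ range (k/2+1),
        (2:ℝ)^(k-2*m) / (((k-2*m)! : ℝ) * (m ! * (m+1)!)) * k !
        = (k.choose (2*m) : ℝ) * ((2*m).choose m) * 2^(k-2*m)
          - (k.choose (2*m) : ℝ) * ((2*m).choose (m+1)) * 2^(k-2*m) := by
      intro m hm
      simp only [mem_range] at hm
      have h2m : 2*m ≤ k := by omega
      have e : (k.choose (2*m) : ℝ) * ((2*m).choose m) * 2^(k-2*m)
          - (k.choose (2*m) : ℝ) * ((2*m).choose (m+1)) * 2^(k-2*m)
          = (k.choose (2*m) : ℝ) * (((2*m).choose m : ℝ) - ((2*m).choose (m+1))) * 2^(k-2*m) := by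
        ring
      rw [e, catdiff m, Nat.cast_choose ℝ h2m]
      have p1 := (Nat.factorial_pos m).ne'
      have p2 := (Nat.factorial_pos (m+1)).ne'
      have p3 := (Nat.factorial_pos (k-2*m)).ne'
      have p4 := (Nat.factorial_pos (2*m)).ne'
      field_simp
    rw [Bk, Finset.sum_mul, Finset.sum_congr rfl step, Finset.sum_sub_distrib, ← N1aR, ← N1bR]
  have key2' : phik k * k ! = ((2*k).choose k : ℝ) - ((2*k).choose (k+2)) := by
    rw [phik]
    have e : ((2*k+2).choose (k+1) : ℝ) * (k+1)! / (k ! * (k+2)!) * k !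
        = ((2*k+2).choose (k+1) : ℝ) * (k+1)! / (k+2)! := by
      field_simp
    rw [e, key2]
  exact mul_right_cancel₀ hk (key.trans key2'.symm)

end Stmt3Aux

namespace Stmt3Aux
open Nat Finset

noncomputable def cc (m : ℕ) : ℝ := (1 / (Nat.factorial m * Nat.factorial (m + 1)) : ℝ)

lemma besselI1_eq (y : ℝ) : besselI1 y = ∑' m : ℕ, cc m * (y/2)^(2*m+1) := rfl

lemma cc_pos (m : ℕ) : 0 < cc m := by
  have h1 : (0:ℝ) < m ! := by exact_mod_cast Nat.factorial_pos m
  have h2 : (0:ℝ) < (m+1)! := by exact_mod_cast Nat.factorial_pos (m+1)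
  unfold cc
  positivity

lemma cc_le (m : ℕ) : cc m ≤ 1 / (m ! : ℝ) := by
  have h1 : (0:ℝ) < m ! := by exact_mod_cast Nat.factorial_pos m
  have h2 : (1:ℝ) ≤ (m+1)! := by exact_mod_cast Nat.one_le_iff_ne_zero.mpr (Nat.factorial_pos (m+1)).ne'
  unfold cc
  rw [div_le_div_iff₀ (by positivity) h1]
  nlinarith

lemma summable_norm_term (y : ℝ) :
    Summable (fun m : ℕ => ‖cc m * (y/2)^(2*m+1)‖) := by
  have hb : ∀ m : ℕ, ‖cc m * (y/2)^(2*m+1)‖ ≤ |y/2| * (((y/2)^2)^m / m !) := by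
    intro m
    have h1 : (0:ℝ) < m ! := by exact_mod_cast Nat.factorial_pos m
    calc ‖cc m * (y/2)^(2*m+1)‖ = cc m * (((y/2)^2)^m * |y/2|) := by
          rw [norm_mul, Real.norm_eq_abs, Real.norm_eq_abs, abs_of_pos (cc_pos m), abs_pow,
            pow_succ, pow_mul, sq_abs]
      _ ≤ (1/(m ! : ℝ)) * (((y/2)^2)^m * |y/2|) := by
          have hnn : (0:ℝ) ≤ ((y/2)^2)^m * |y/2| := by positivity
          exact mul_le_mul_of_nonneg_right (cc_le m) hnn
      _ = |y/2| * (((y/2)^2)^m / m !) := by ring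
  refine Summable.of_nonneg_of_le (fun m => norm_nonneg _) hb ?_
  exact (Real.summable_pow_div_factorial ((y/2)^2)).mul_left _

lemma summable_term (y : ℝ) : Summable (fun m : ℕ => cc m * (y/2)^(2*m+1)) :=
  (summable_norm_term y).of_norm

noncomputable def Dk (k : ℕ) : ℝ := ∑ mn ∈ antidiagonal k, cc mn.1 * cc mn.2

lemma bessel_sq (y : ℝ) :
    besselI1 y ^ 2 = ∑' k : ℕ, Dk k * (y/2)^(2*k+2) := by
  rw [besselI1_eq, sq,
    tsum_mul_tsum_eq_tsum_sum_antidiagonal_of_summable_norm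
      (summable_norm_term y) (summable_norm_term y)]
  refine tsum_congr fun k => ?_
  rw [Dk, Finset.sum_mul]
  refine Finset.sum_congr rfl fun mn hmn => ?_
  have hk : mn.1 + mn.2 = k := Finset.HasAntidiagonal.mem_antidiagonal.mp hmn
  have he : (2*mn.1+1) + (2*mn.2+1) = 2*k+2 := by omega
  rw [← he, pow_add]
  ring

lemma Dk_eq (k : ℕ) :
    Dk k = ((2*k+2).choose (k+1) : ℝ) / (k ! * (k+2)!) := by
  have hk : (0:ℝ) < k ! := by exact_mod_cast Nat.factorial_pos k
  have hk2 : (0:ℝ) < (k+2)! := by exact_mod_cast Nat.factorial_pos (k+2)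
  rw [eq_div_iff (by positivity)]
  have hV : ((2*k+2).choose (k+1) : ℝ)
      = ∑ ij ∈ antidiagonal (k+1), (k.choose ij.1 : ℝ) * ((k+2).choose ij.2) := by
    have h := Nat.add_choose_eq k (k+2) (k+1)
    have h2 : (2*k+2).choose (k+1) = (k + (k+2)).choose (k+1) := by
      congr 1
      omega
    rw [h2, h]
    push_cast
    rfl
  rw [hV, Finset.Nat.sum_antidiagonal_succ']
  have h0 : (k.choose (k+1) : ℝ) * ((k+2).choose 0) = 0 := by
    rw [Nat.choose_eq_zero_of_lt (by omega)]
    simp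
  rw [h0, zero_add, Dk, Finset.sum_mul]
  refine (Finset.sum_congr rfl fun mn hmn => ?_).symm
  have hk' : mn.1 + mn.2 = k := Finset.HasAntidiagonal.mem_antidiagonal.mp hmn
  rw [Nat.cast_choose ℝ (by omega : mn.1 ≤ k),
    Nat.cast_choose ℝ (by omega : mn.2 + 1 ≤ k+2),
    show k - mn.1 = mn.2 from by omega,
    show k + 2 - (mn.2+1) = mn.1 + 1 from by omega]
  unfold cc
  have p1 : (0:ℝ) < mn.1 ! := by exact_mod_cast Nat.factorial_pos _
  have p2 : (0:ℝ) < mn.2 ! := by exact_mod_cast Nat.factorial_pos _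
  have p3 : (0:ℝ) < (mn.1+1)! := by exact_mod_cast Nat.factorial_pos _
  have p4 : (0:ℝ) < (mn.2+1)! := by exact_mod_cast Nat.factorial_pos _
  field_simp

lemma integral_moment (k : ℕ) :
    ∫ s in Set.Ioi (0:ℝ), s^(2*k+3) * Real.exp (-s^2) = (k+1)! / 2 := by
  have hq : (-1 : ℝ) < ((2*k+3 : ℕ) : ℝ) := by
    have : (0:ℝ) ≤ ((2*k+3 : ℕ) : ℝ) := Nat.cast_nonneg _
    linarith
  have h := integral_rpow_mul_exp_neg_rpow (p := 2) (q := ((2*k+3 : ℕ) : ℝ)) two_pos hq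
  have hc : ∀ s ∈ Set.Ioi (0:ℝ), s ^ (((2*k+3:ℕ)) : ℝ) * Real.exp (-s ^ (2:ℝ))
      = s^(2*k+3) * Real.exp (-s^2) := by
    intro s _
    rw [Real.rpow_natCast, Real.rpow_two]
  rw [setIntegral_congr_fun measurableSet_Ioi hc] at h
  rw [h, show (((2*k+3:ℕ):ℝ) + 1)/2 = ((k+1 : ℕ) : ℝ) + 1 from by push_cast; ring,
    Real.Gamma_nat_eq_factorial]
  push_cast
  ring

lemma integrable_moment (k : ℕ) :
    IntegrableOn (fun s : ℝ => s^(2*k+3) * Real.exp (-s^2)) (Set.Ioi 0) := by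
  have h := integrableOn_rpow_mul_exp_neg_mul_sq (b := 1) one_pos
    (s := ((2*k+3:ℕ) : ℝ)) (by
      have : (0:ℝ) ≤ ((2*k+3 : ℕ) : ℝ) := Nat.cast_nonneg _
      linarith)
  refine h.congr_fun (fun s hs => ?_) measurableSet_Ioi
  beta_reduce
  rw [Real.rpow_natCast]
  norm_num

end Stmt3Aux

namespace Stmt3Aux
open Nat Finset

def sigEquiv : (Σ _k : ℕ, Fin (_k/2+1)) ≃ ℕ × ℕ where
  toFun := fun p => (p.1 - 2*(p.2 : ℕ), (p.2 : ℕ))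
  invFun := fun q => ⟨q.1 + 2*q.2, ⟨q.2, by omega⟩⟩
  left_inv := by
    rintro ⟨k, m⟩
    have hm : (m:ℕ) ≤ k/2 := Nat.lt_succ_iff.mp m.2
    have h2 : 2*(m:ℕ) ≤ k := by omega
    have h1 : k - 2*(m:ℕ) + 2*(m:ℕ) = k := by omega
    show (⟨k - 2*(m:ℕ) + 2*(m:ℕ), ⟨(m:ℕ), by omega⟩⟩ : Σ _k : ℕ, Fin (_k/2+1)) = ⟨k, m⟩
    refine Sigma.ext h1 ?_
    rw [Fin.heq_ext_iff (congrArg (fun t => t / 2 + 1) h1)]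
  right_inv := by
    rintro ⟨i, m⟩
    simp

lemma exp_tsum (t : ℝ) : Real.exp t = ∑' i : ℕ, t^i / i ! := by
  rw [Real.exp_eq_exp_ℝ, NormedSpace.exp_eq_tsum_div]

lemma summable_norm_exp (t : ℝ) : Summable (fun i : ℕ => ‖t^i / (i ! : ℝ)‖) := by
  have h : ∀ i : ℕ, ‖t^i/(i ! : ℝ)‖ = |t|^i / i ! := by
    intro i
    rw [norm_div, norm_pow, Real.norm_eq_abs, Real.norm_eq_abs,
      abs_of_nonneg (by positivity : (0:ℝ) ≤ (i ! : ℝ))]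
  simp only [h]
  exact Real.summable_pow_div_factorial _

lemma summable_norm_term' (x : ℝ) : Summable (fun m : ℕ => ‖cc m * x^(2*m+1)‖) := by
  have := summable_norm_term (2*x)
  simpa [mul_div_assoc] using this

set_option maxHeartbeats 1000000 in
lemma rhs_series (x : ℝ) :
    Real.exp (2*x) * (∑' m : ℕ, cc m * x^(2*m+1)) = ∑' k : ℕ, Bk k * x^(k+1) := by
  rw [exp_tsum (2*x),
    tsum_mul_tsum_of_summable_norm (summable_norm_exp (2*x)) (summable_norm_term' x)]
  have hF : Summable (fun z : ℕ × ℕ => (2*x)^z.1/(z.1 ! : ℝ) * (cc z.2 * x^(2*z.2+1))) :=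
    summable_mul_of_summable_norm (f := fun i => (2*x)^i/(i ! : ℝ))
      (g := fun m => cc m * x^(2*m+1)) (summable_norm_exp (2*x)) (summable_norm_term' x)
  rw [← Equiv.tsum_eq sigEquiv]
  have h2 := Summable.tsum_sigma (γ := fun _k : ℕ => Fin (_k/2+1))
    (f := fun c => (2*x)^(sigEquiv c).1/(((sigEquiv c).1 ! : ℝ))
      * (cc (sigEquiv c).2 * x^(2*(sigEquiv c).2+1)))
    (sigEquiv.summable_iff.mpr hF)
  rw [h2]
  refine tsum_congr fun k => ?_
  rw [tsum_fintype]
  have hfin : ∑ c : Fin (k/2+1),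
      (fun z : ℕ × ℕ => (2*x)^z.1/(z.1 ! : ℝ) * (cc z.2 * x^(2*z.2+1))) (sigEquiv ⟨k, c⟩)
      = ∑ m ∈ range (k/2+1), (2*x)^(k-2*m)/(((k-2*m)!) : ℝ) * (cc m * x^(2*m+1)) := by
    rw [← Fin.sum_univ_eq_sum_range
      (fun m => (2*x)^(k-2*m)/(((k-2*m)!) : ℝ) * (cc m * x^(2*m+1)))]
    rfl
  rw [hfin, Bk, Finset.sum_mul]
  refine Finset.sum_congr rfl fun m hm => ?_
  simp only [mem_range] at hm
  have h2 : 2*m ≤ k := by omega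
  have he : (k-2*m) + (2*m+1) = k+1 := by omega
  have hx : x^(k+1) = x^(k-2*m) * x^(2*m+1) := by rw [← pow_add, he]
  have p1 : (0:ℝ) < ((k-2*m)! : ℝ) := by exact_mod_cast Nat.factorial_pos _
  rw [mul_pow, hx]
  unfold cc
  have p2 : (0:ℝ) < (m ! : ℝ) := by exact_mod_cast Nat.factorial_pos _
  have p3 : (0:ℝ) < ((m+1)! : ℝ) := by exact_mod_cast Nat.factorial_pos _
  field_simp

end Stmt3Aux

namespace Stmt3Aux
open Nat Finset

lemma Dk_nonneg (k : ℕ) : 0 ≤ Dk k :=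
  Finset.sum_nonneg fun mn _ => le_of_lt (mul_pos (cc_pos _) (cc_pos _))

lemma phik_nonneg (k : ℕ) : 0 ≤ phik k := by
  unfold phik
  positivity

lemma choose_le_two_pow' (n k : ℕ) : n.choose k ≤ 2^n := by
  rcases le_or_gt n k with h | h
  · rcases eq_or_lt_of_le h with rfl | h'
    · rw [Nat.choose_self]
      exact Nat.one_le_two_pow
    · rw [Nat.choose_eq_zero_of_lt h']
      exact Nat.zero_le _
  · calc n.choose k ≤ ∑ i ∈ range (n+1), n.choose i :=
          Finset.single_le_sum (fun i _ => Nat.zero_le _) (mem_range.mpr (by omega))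
      _ = 2^n := Nat.sum_range_choose n

lemma phik_le (k : ℕ) : phik k ≤ 4^(k+1) / (k ! : ℝ) := by
  have h1 : ((2*k+2).choose (k+1) : ℝ) ≤ 4^(k+1) := by
    have := choose_le_two_pow' (2*k+2) (k+1)
    have h2 : (2:ℕ)^(2*k+2) = 4^(k+1) := by
      rw [show 2*k+2 = 2*(k+1) from by ring, pow_mul]
      norm_num
    exact_mod_cast h2 ▸ this
  have h2 : ((k+1)! : ℝ) ≤ ((k+2)! : ℝ) := by
    exact_mod_cast Nat.factorial_le (by omega)
  have p1 : (0:ℝ) < (k ! : ℝ) := by exact_mod_cast Nat.factorial_pos _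
  have p2 : (0:ℝ) < ((k+2)! : ℝ) := by exact_mod_cast Nat.factorial_pos _
  have p3 : (0:ℝ) < ((k+1)! : ℝ) := by exact_mod_cast Nat.factorial_pos _
  have hc : (0:ℝ) ≤ ((2*k+2).choose (k+1) : ℝ) := Nat.cast_nonneg _
  unfold phik
  rw [div_le_div_iff₀ (by positivity) p1]
  calc ((2*k+2).choose (k+1) : ℝ) * ((k+1)!) * (k !)
      ≤ 4^(k+1) * ((k+2)!) * (k !) := by
        have := mul_le_mul h1 h2 (le_of_lt p3) (by positivity)
        nlinarith
    _ = 4^(k+1) * ((k !) * ((k+2)!)) := by ring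

lemma summable_phi (x : ℝ) (hx : 0 ≤ x) :
    Summable (fun k : ℕ => phik k * x^(k+1) / 2) := by
  have hs : Summable (fun k : ℕ => (4*x)^(k+1) / (k ! : ℝ)) := by
    have h := (Real.summable_pow_div_factorial (4*x)).mul_left (4*x)
    refine h.congr fun k => ?_
    rw [pow_succ]
    ring
  refine Summable.of_nonneg_of_le (fun k => by have := phik_nonneg k; positivity)
    (fun k => ?_) hs
  have p1 : (0:ℝ) < (k ! : ℝ) := by exact_mod_cast Nat.factorial_pos _
  calc phik k * x^(k+1) / 2 ≤ phik k * x^(k+1) := by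
        have h0 : 0 ≤ phik k * x^(k+1) := by have := phik_nonneg k; positivity
        linarith
    _ ≤ (4^(k+1) / (k ! : ℝ)) * x^(k+1) :=
        mul_le_mul_of_nonneg_right (phik_le k) (by positivity)
    _ = (4*x)^(k+1) / (k ! : ℝ) := by
        rw [mul_pow]
        ring

end Stmt3Aux

open Stmt3Aux Nat in
theorem stmt3 (a : ℝ) (ha : 0 < a) :
    ∫ s in Set.Ioi (0 : ℝ), Real.exp (-s ^ 2) * besselI1 (a * s) ^ 2 * s
      = (1 / 2) * Real.exp (a ^ 2 / 2) * besselI1 (a ^ 2 / 2) := by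
  have key : ∀ s : ℝ, Real.exp (-s^2) * besselI1 (a*s)^2 * s
      = ∑' k : ℕ, (Dk k * (a/2)^(2*k+2)) * (s^(2*k+3) * Real.exp (-s^2)) := by
    intro s
    rw [bessel_sq (a*s), mul_assoc, ← tsum_mul_right, ← tsum_mul_left]
    refine tsum_congr fun k => ?_
    have h1 : (a*s/2)^(2*k+2) = (a/2)^(2*k+2) * s^(2*k+2) := by
      rw [← mul_pow]
      congr 1
      ring
    rw [h1, show 2*k+3 = (2*k+2)+1 from by omega, pow_succ]
    ring
  rw [MeasureTheory.setIntegral_congr_fun measurableSet_Ioi (fun s _ => key s)]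
  have hInt : ∀ k : ℕ, Integrable
      (fun s : ℝ => (Dk k * (a/2)^(2*k+2)) * (s^(2*k+3) * Real.exp (-s^2)))
      (MeasureTheory.volume.restrict (Set.Ioi 0)) :=
    fun k => (integrable_moment k).const_mul _
  have hnormval : ∀ k : ℕ,
      (∫ s in Set.Ioi (0:ℝ), ‖(Dk k * (a/2)^(2*k+2)) * (s^(2*k+3) * Real.exp (-s^2))‖)
        = (Dk k * (a/2)^(2*k+2)) * (((k+1)! : ℝ)/2) := by
    intro k
    have hck : 0 ≤ Dk k * (a/2)^(2*k+2) :=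
      mul_nonneg (Dk_nonneg k) (by positivity)
    have heq : ∀ s ∈ Set.Ioi (0:ℝ),
        ‖(Dk k * (a/2)^(2*k+2)) * (s^(2*k+3) * Real.exp (-s^2))‖
          = (Dk k * (a/2)^(2*k+2)) * (s^(2*k+3) * Real.exp (-s^2)) := by
      intro s hs
      have hs0 : (0:ℝ) < s := hs
      rw [Real.norm_eq_abs, abs_of_nonneg (by positivity)]
    rw [MeasureTheory.setIntegral_congr_fun measurableSet_Ioi heq,
      MeasureTheory.integral_const_mul, integral_moment]
  have hterm : ∀ k : ℕ, (Dk k * (a/2)^(2*k+2)) * (((k+1)! : ℝ)/2)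
      = phik k * ((a/2)^2)^(k+1) / 2 := by
    intro k
    rw [Dk_eq, show 2*k+2 = 2*(k+1) from by ring, pow_mul]
    unfold phik
    ring
  have hSum : Summable (fun k : ℕ =>
      ∫ s in Set.Ioi (0:ℝ), ‖(Dk k * (a/2)^(2*k+2)) * (s^(2*k+3) * Real.exp (-s^2))‖) := by
    refine ((summable_phi ((a/2)^2) (by positivity)).congr fun k => ?_)
    rw [← hterm k, ← hnormval k]
  rw [← MeasureTheory.integral_tsum_of_summable_integral_norm hInt hSum]
  have hval : ∀ k : ℕ,
      (∫ s in Set.Ioi (0:ℝ), (Dk k * (a/2)^(2*k+2)) * (s^(2*k+3) * Real.exp (-s^2)))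
        = (Dk k * (a/2)^(2*k+2)) * (((k+1)! : ℝ)/2) := by
    intro k
    rw [MeasureTheory.integral_const_mul, integral_moment]
  rw [tsum_congr hval]
  have hbig : (1/2 : ℝ) * Real.exp (a^2/2) * besselI1 (a^2/2)
      = 1/2 * ∑' k : ℕ, Bk k * ((a/2)^2)^(k+1) := by
    rw [besselI1_eq, show a^2/2/2 = (a/2)^2 from by ring,
      show a^2/2 = 2*((a/2)^2) from by ring, mul_assoc, rhs_series ((a/2)^2)]
  rw [hbig, ← tsum_mul_left]
  refine tsum_congr fun k => ?_
  rw [hterm k, Bk_eq]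
  ring
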